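/- arXiv:math/0003067 — 3 statements merged into one kernel-verified Lean document; each statement's English description precedes it below -/
import Mathlib

section
/- Let B be an invertible real n×n matrix and E ⊆ ℝⁿ a measurable set such that the sets B^j(E), j ∈ ℤ, are pairwise disjoint and ℝⁿ \ ⋃_{j∈ℤ} B^j(E) has Lebesgue measure zero. Then the map Φ : L²(ℝⁿ) → L²(E × ℤ) defined by Φf(x,k) = |det B|^{k/2} f(B^k x) is a Hilbert space isomorphism (unitary), where E × ℤ carries the product of Lebesgue measure on E and counting measure on ℤ. -/
open MeasureTheory Complex Matrix Set
open scoped ENNReal NNReal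

namespace TilingUnitaryAux

instance : SFinite (Measure.count : Measure ℤ) := by
  have h : (Measure.count : Measure ℤ) = Measure.sum Measure.dirac := rfl
  rw [h]; infer_instance

variable {n : ℕ}

lemma measurable_mulVec (M : Matrix (Fin n) (Fin n) ℝ) :
    Measurable fun x => M.mulVec x := by
  have : Continuous (Matrix.toLin' M) := LinearMap.continuous_of_finiteDimensional _
  exact this.measurable

/-- the image of `E` under `B^k` -/
def img (B : Matrix (Fin n) (Fin n) ℝ) (E : Set (Fin n → ℝ)) (k : ℤ) : Set (Fin n → ℝ) :=
  (fun x => (B ^ k).mulVec x) '' E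

variable {B : Matrix (Fin n) (Fin n) ℝ}

lemma abs_det_zpow (B : Matrix (Fin n) (Fin n) ℝ) (k : ℤ) : |(B ^ k).det| = |B.det| ^ k := by
  rcases k with m | m
  · simp [zpow_natCast, det_pow, _root_.abs_pow]
  · rw [zpow_negSucc, det_nonsing_inv, Ring.inverse_eq_inv, det_pow, zpow_negSucc, _root_.abs_inv,
      _root_.abs_pow]

section

variable (hB : B.det ≠ 0)
include hB

lemma det_zpow_ne (k : ℤ) : (B ^ k).det ≠ 0 := by
  have h1 : (0:ℝ) < |B.det| ^ k := zpow_pos (abs_pos.mpr hB) k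
  rw [← abs_det_zpow B k] at h1
  exact fun h => by simp [h] at h1

lemma inv_apply (k : ℤ) (x : Fin n → ℝ) :
    (B ^ (-k)).mulVec ((B ^ k).mulVec x) = x := by
  rw [mulVec_mulVec, Matrix.zpow_neg_mul_zpow_self k (isUnit_iff_ne_zero.mpr hB), one_mulVec]

lemma img_eq (E : Set (Fin n → ℝ)) (k : ℤ) :
    img B E k = (fun y => (B ^ (-k)).mulVec y) ⁻¹' E := by
  ext y
  simp only [img, Set.mem_image, Set.mem_preimage]
  constructor
  · rintro ⟨x, hx, rfl⟩
    simpa [inv_apply hB k x] using hx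
  · intro hy
    refine ⟨(B ^ (-k)).mulVec y, hy, ?_⟩
    have h := inv_apply hB (-k) y
    rwa [neg_neg] at h

lemma img_meas {E : Set (Fin n → ℝ)} (hE : MeasurableSet E) (k : ℤ) :
    MeasurableSet (img B E k) := by
  rw [img_eq hB E k]
  exact measurable_mulVec _ hE

lemma map_eq (k : ℤ) :
    Measure.map (fun x => (B ^ k).mulVec x) volume
      = ENNReal.ofReal (|B.det| ^ (-k)) • volume := by
  have h := Real.map_matrix_volume_pi_eq_smul_volume_pi (det_zpow_ne hB k)
  have hfun : ⇑(Matrix.toLin' (B ^ k)) = fun x => (B ^ k).mulVec x :=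
    funext fun x => Matrix.toLin'_apply _ _
  rw [hfun] at h
  rw [h, _root_.abs_inv, abs_det_zpow, ← _root_.zpow_neg]

lemma lemA {E : Set (Fin n → ℝ)} (hE : MeasurableSet E) (k : ℤ) (f : (Fin n → ℝ) → ℝ≥0∞)
    (hf : Measurable f) :
    ∫⁻ x in E, f ((B ^ k).mulVec x) ∂volume
      = ENNReal.ofReal (|B.det| ^ (-k)) * ∫⁻ y in img B E k, f y ∂volume := by
  set g : (Fin n → ℝ) → ℝ≥0∞ := (img B E k).indicator f with hg
  have hginj : ∀ x, E.indicator (fun x => f ((B ^ k).mulVec x)) x = g ((B ^ k).mulVec x) := by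
    intro x
    by_cases hx : x ∈ E
    · have hmem : (B ^ k).mulVec x ∈ img B E k := Set.mem_image_of_mem _ hx
      rw [Set.indicator_of_mem hx, hg, Set.indicator_of_mem hmem]
    · rw [Set.indicator_of_notMem hx, hg, Set.indicator_of_notMem]
      rintro ⟨x', hx', hxx⟩
      apply hx
      have : x' = x := by
        have := congrArg (fun y => (B ^ (-k)).mulVec y) hxx
        simpa [inv_apply hB k] using this
      rwa [← this]
  have hgmeas : Measurable g := hf.indicator (img_meas hB hE k)
  calc ∫⁻ x in E, f ((B ^ k).mulVec x) ∂volume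
      = ∫⁻ x, E.indicator (fun x => f ((B ^ k).mulVec x)) x ∂volume := by
        rw [lintegral_indicator hE]
    _ = ∫⁻ x, g ((B ^ k).mulVec x) ∂volume := by
        exact lintegral_congr hginj
    _ = ∫⁻ y, g y ∂(Measure.map (fun x => (B ^ k).mulVec x) volume) := by
        rw [lintegral_map hgmeas (measurable_mulVec _)]
    _ = ENNReal.ofReal (|B.det| ^ (-k)) * ∫⁻ y, g y ∂volume := by
        rw [map_eq hB, lintegral_smul_measure, smul_eq_mul]
    _ = ENNReal.ofReal (|B.det| ^ (-k)) * ∫⁻ y in img B E k, f y ∂volume := by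
        rw [hg, lintegral_indicator (img_meas hB hE k)]

lemma measurable_T (B : Matrix (Fin n) (Fin n) ℝ) :
    Measurable fun p : (Fin n → ℝ) × ℤ => (B ^ p.2).mulVec p.1 :=
  measurable_from_prod_countable_left (fun k : ℤ => measurable_mulVec (B ^ k))

lemma lemL {E : Set (Fin n → ℝ)} (hE : MeasurableSet E)
    (hdisj : Pairwise fun j k : ℤ => Disjoint (img B E j) (img B E k))
    (hcover : volume ((⋃ j : ℤ, img B E j)ᶜ) = 0)
    (f : (Fin n → ℝ) → ℝ≥0∞) (hf : Measurable f) :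
    ∫⁻ p, ENNReal.ofReal (|B.det| ^ p.2) * f ((B ^ p.2).mulVec p.1)
        ∂((volume.restrict E).prod (Measure.count : Measure ℤ))
      = ∫⁻ y, f y ∂volume := by
  have hc : (0:ℝ) < |B.det| := abs_pos.mpr hB
  have hFk : ∀ k : ℤ, Measurable fun x : Fin n → ℝ =>
      ENNReal.ofReal (|B.det| ^ k) * f ((B ^ k).mulVec x) :=
    fun k => (measurable_const.mul (hf.comp (measurable_mulVec _)))
  have hF : Measurable fun p : (Fin n → ℝ) × ℤ =>
      ENNReal.ofReal (|B.det| ^ p.2) * f ((B ^ p.2).mulVec p.1) := by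
    apply measurable_from_prod_countable_left fun k => hFk k
  rw [MeasureTheory.lintegral_prod _ hF.aemeasurable]
  have h1 : ∀ x : Fin n → ℝ,
      (∫⁻ k, ENNReal.ofReal (|B.det| ^ k) * f ((B ^ k).mulVec x) ∂(Measure.count : Measure ℤ))
        = ∑' k : ℤ, ENNReal.ofReal (|B.det| ^ k) * f ((B ^ k).mulVec x) := fun x =>
    lintegral_count _
  calc (∫⁻ x in E, ∫⁻ k, ENNReal.ofReal (|B.det| ^ k) * f ((B ^ k).mulVec x)
        ∂(Measure.count : Measure ℤ) ∂volume)
      = ∫⁻ x in E, ∑' k : ℤ, ENNReal.ofReal (|B.det| ^ k) * f ((B ^ k).mulVec x) ∂volume := by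
        exact lintegral_congr h1
    _ = ∑' k : ℤ, ∫⁻ x in E, ENNReal.ofReal (|B.det| ^ k) * f ((B ^ k).mulVec x) ∂volume := by
        exact lintegral_tsum fun k => (hFk k).aemeasurable
    _ = ∑' k : ℤ, ∫⁻ y in img B E k, f y ∂volume := by
        refine tsum_congr fun k => ?_
        have hfk : Measurable fun x : Fin n → ℝ => f ((B ^ k).mulVec x) :=
          hf.comp (measurable_mulVec _)
        rw [lintegral_const_mul _ hfk, lemA hB hE k f hf,
          ← mul_assoc, ← ENNReal.ofReal_mul (zpow_nonneg hc.le _)]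
        have : |B.det| ^ k * |B.det| ^ (-k) = 1 := by
          rw [← zpow_add₀ (ne_of_gt hc)]; simp
        rw [this, ENNReal.ofReal_one, one_mul]
    _ = ∫⁻ y in ⋃ k : ℤ, img B E k, f y ∂volume := by
        exact (lintegral_iUnion (fun k => img_meas hB hE k) hdisj f).symm
    _ = ∫⁻ y, f y ∂volume := by
        have hU : MeasurableSet (⋃ k : ℤ, img B E k) :=
          MeasurableSet.iUnion fun k => img_meas hB hE k
        have h2 := lintegral_add_compl f hU (μ := volume)
        have h3 : ∫⁻ y in (⋃ k : ℤ, img B E k)ᶜ, f y ∂volume = 0 := by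
          rw [Measure.restrict_eq_zero.mpr hcover, lintegral_zero_measure]
        rw [← h2, h3, add_zero]

lemma lemNT {E : Set (Fin n → ℝ)} (hE : MeasurableSet E)
    (hdisj : Pairwise fun j k : ℤ => Disjoint (img B E j) (img B E k))
    (hcover : volume ((⋃ j : ℤ, img B E j)ᶜ) = 0)
    {N : Set (Fin n → ℝ)} (hN : MeasurableSet N) (hN0 : volume N = 0) :
    ∀ᵐ p ∂((volume.restrict E).prod (Measure.count : Measure ℤ)),
      (B ^ p.2).mulVec p.1 ∉ N := by
  have hc : (0:ℝ) < |B.det| := abs_pos.mpr hB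
  have hind : Measurable (N.indicator (1 : (Fin n → ℝ) → ℝ≥0∞)) :=
    measurable_one.indicator hN
  have h0 := lemL hB hE hdisj hcover _ hind
  rw [lintegral_indicator_one hN, hN0] at h0
  have hFk : ∀ k : ℤ, Measurable fun x : Fin n → ℝ =>
      ENNReal.ofReal (|B.det| ^ k) * N.indicator 1 ((B ^ k).mulVec x) :=
    fun k => measurable_const.mul (hind.comp (measurable_mulVec _))
  have hF : Measurable fun p : (Fin n → ℝ) × ℤ =>
      ENNReal.ofReal (|B.det| ^ p.2) * N.indicator 1 ((B ^ p.2).mulVec p.1) := by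
    apply measurable_from_prod_countable_left fun k => hFk k
  have h1 := (lintegral_eq_zero_iff hF).mp h0
  filter_upwards [h1] with p hp hmem
  have h2 : ENNReal.ofReal (|B.det| ^ p.2) * N.indicator 1 ((B ^ p.2).mulVec p.1) = 0 := hp
  rw [Set.indicator_of_mem hmem, Pi.one_apply, mul_one, ENNReal.ofReal_eq_zero] at h2
  exact absurd h2 (not_le.mpr (zpow_pos hc _))

lemma lemTr {E : Set (Fin n → ℝ)} (hE : MeasurableSet E)
    (hdisj : Pairwise fun j k : ℤ => Disjoint (img B E j) (img B E k))
    (hcover : volume ((⋃ j : ℤ, img B E j)ᶜ) = 0)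
    (v : ℤ → ℂ) {f g : (Fin n → ℝ) → ℂ} (hfg : f =ᵐ[volume] g) :
    (fun p : (Fin n → ℝ) × ℤ => v p.2 * f ((B ^ p.2).mulVec p.1))
      =ᵐ[(volume.restrict E).prod (Measure.count : Measure ℤ)]
    fun p : (Fin n → ℝ) × ℤ => v p.2 * g ((B ^ p.2).mulVec p.1) := by
  have h0 : volume {x | f x ≠ g x} = 0 := hfg
  obtain ⟨N, hsub, hNmeas, hN0⟩ := exists_measurable_superset_of_null h0
  filter_upwards [lemNT hB hE hdisj hcover hNmeas hN0] with p hp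
  have : f ((B ^ p.2).mulVec p.1) = g ((B ^ p.2).mulVec p.1) := by
    by_contra hne
    exact hp (hsub hne)
  rw [this]

end

/-- the weight function -/
noncomputable def w (B : Matrix (Fin n) (Fin n) ℝ) (k : ℤ) : ℂ :=
  ((|B.det| ^ ((k : ℝ) / 2) : ℝ) : ℂ)

lemma lemW (hB : B.det ≠ 0) (k : ℤ) (z : ℂ) :
    ((‖w B k * z‖₊ : ℝ≥0∞)) ^ (2:ℕ)
      = ENNReal.ofReal (|B.det| ^ k) * ((‖z‖₊ : ℝ≥0∞)) ^ (2:ℕ) := by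
  have hc : (0:ℝ) < |B.det| := abs_pos.mpr hB
  rw [nnnorm_mul, ENNReal.coe_mul, mul_pow]
  congr 1
  have h1 : ((‖w B k‖₊ : ℝ≥0∞)) = ENNReal.ofReal (|B.det| ^ ((k:ℝ)/2)) := by
    rw [w, Complex.nnnorm_real]
    exact Real.enorm_eq_ofReal (Real.rpow_nonneg hc.le _)
  rw [h1, ← ENNReal.ofReal_pow (Real.rpow_nonneg hc.le _)]
  congr 1
  rw [← Real.rpow_natCast (|B.det| ^ ((k:ℝ)/2)) 2, ← Real.rpow_mul hc.le]
  rw [show (k:ℝ)/2 * (2:ℕ) = (k:ℝ) by push_cast; ring]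
  exact Real.rpow_intCast _ k

lemma lemWW (hB : B.det ≠ 0) (k : ℤ) : w B k * w B (-k) = 1 := by
  have hc : (0:ℝ) < |B.det| := abs_pos.mpr hB
  rw [w, w, ← Complex.ofReal_mul, ← Real.rpow_add hc]
  rw [show (k:ℝ)/2 + ((-k : ℤ) : ℝ)/2 = 0 by push_cast; ring]
  rw [Real.rpow_zero, Complex.ofReal_one]

lemma eLpNorm_two_sq {α : Type*} [MeasurableSpace α] (μ : Measure α) (f : α → ℂ) :
    eLpNorm f 2 μ = (∫⁻ a, ((‖f a‖₊ : ℝ≥0∞)) ^ (2:ℕ) ∂μ) ^ ((2:ℝ)⁻¹) := by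
  rw [eLpNorm_eq_lintegral_rpow_enorm_toReal two_ne_zero ENNReal.ofNat_ne_top]
  congr 1
  · apply lintegral_congr; intro a
    rw [ENNReal.toReal_ofNat, ← ENNReal.rpow_natCast]
    norm_num
    rfl
  · rw [ENNReal.toReal_ofNat]; norm_num

lemma lemNorm (hB : B.det ≠ 0) {E : Set (Fin n → ℝ)} (hE : MeasurableSet E)
    (hdisj : Pairwise fun j k : ℤ => Disjoint (img B E j) (img B E k))
    (hcover : volume ((⋃ j : ℤ, img B E j)ᶜ) = 0)
    {f : (Fin n → ℝ) → ℂ} (hf : Measurable f) :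
    eLpNorm (fun p : (Fin n → ℝ) × ℤ => w B p.2 * f ((B ^ p.2).mulVec p.1)) 2
        ((volume.restrict E).prod (Measure.count : Measure ℤ))
      = eLpNorm f 2 volume := by
  rw [eLpNorm_two_sq, eLpNorm_two_sq]
  congr 1
  have hh : Measurable fun y => ((‖f y‖₊ : ℝ≥0∞)) ^ (2:ℕ) := hf.nnnorm.coe_nnreal_ennreal.pow_const _
  rw [← lemL hB hE hdisj hcover _ hh]
  apply lintegral_congr
  intro p
  exact lemW hB p.2 _

end TilingUnitaryAux

open TilingUnitaryAux

/-- If `E ⊆ ℝⁿ` tiles `ℝⁿ` under dilation by an invertible matrix `B`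
(the sets `B^j(E)`, `j ∈ ℤ`, are pairwise disjoint and cover `ℝⁿ` up to a null set),
then `Φ f (x, k) = |det B|^{k/2} f (B^k x)` defines a Hilbert space isomorphism
(unitary) from `L²(ℝⁿ)` onto `L²(E × ℤ)`, where `E × ℤ` carries the product of
Lebesgue measure on `E` and counting measure on `ℤ`. -/
theorem tiling_unitary {n : ℕ} (B : Matrix (Fin n) (Fin n) ℝ) (hB : B.det ≠ 0)
    (E : Set (Fin n → ℝ)) (hE : MeasurableSet E)
    (hdisj : Pairwise fun j k : ℤ =>
      Disjoint ((fun x => (B ^ j).mulVec x) '' E) ((fun x => (B ^ k).mulVec x) '' E))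
    (hcover : volume ((⋃ j : ℤ, (fun x => (B ^ j).mulVec x) '' E)ᶜ) = 0) :
    ∃ Φ : Lp ℂ 2 (volume : Measure (Fin n → ℝ)) ≃ₗᵢ[ℂ]
        Lp ℂ 2 (((volume : Measure (Fin n → ℝ)).restrict E).prod
          (Measure.count : Measure ℤ)),
      ∀ f : Lp ℂ 2 (volume : Measure (Fin n → ℝ)),
        (Φ f : (Fin n → ℝ) × ℤ → ℂ) =ᵐ[((volume : Measure (Fin n → ℝ)).restrict E).prod
            (Measure.count : Measure ℤ)]
          fun p => ((|B.det| ^ ((p.2 : ℝ) / 2) : ℝ) : ℂ) * f ((B ^ p.2).mulVec p.1) := by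
  classical
  have hdisj' : Pairwise fun j k : ℤ => Disjoint (img B E j) (img B E k) := hdisj
  have hcover' : volume ((⋃ j : ℤ, img B E j)ᶜ) = 0 := hcover
  have hc : (0:ℝ) < |B.det| := abs_pos.mpr hB
  set ν := ((volume : Measure (Fin n → ℝ)).restrict E).prod (Measure.count : Measure ℤ) with hν
  -- membership and norm identity for the forward map
  have hmem : ∀ f : Lp ℂ 2 (volume : Measure (Fin n → ℝ)),
      MemLp (fun p : (Fin n → ℝ) × ℤ =>
        w B p.2 * (f : (Fin n → ℝ) → ℂ) ((B ^ p.2).mulVec p.1)) 2 ν ∧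
      eLpNorm (fun p : (Fin n → ℝ) × ℤ =>
          w B p.2 * (f : (Fin n → ℝ) → ℂ) ((B ^ p.2).mulVec p.1)) 2 ν
        = eLpNorm (f : (Fin n → ℝ) → ℂ) 2 (volume : Measure (Fin n → ℝ)) := by
    intro f
    have hsm := Lp.aestronglyMeasurable f
    set f' := hsm.mk _ with hf'def
    have hf'meas : Measurable f' := hsm.stronglyMeasurable_mk.measurable
    have hae : (f : (Fin n → ℝ) → ℂ) =ᵐ[volume] f' := hsm.ae_eq_mk
    have htr := lemTr hB hE hdisj' hcover' (w B) hae
    have hGmeas : Measurable fun p : (Fin n → ℝ) × ℤ =>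
        w B p.2 * f' ((B ^ p.2).mulVec p.1) := by
      apply measurable_from_prod_countable_left
      intro k
      show Measurable fun x : Fin n → ℝ => w B k * f' ((B ^ k).mulVec x)
      exact measurable_const.mul (hf'meas.comp (measurable_mulVec (B ^ k)))
    have hnorm' := lemNorm hB hE hdisj' hcover' hf'meas
    have heq1 : eLpNorm (fun p : (Fin n → ℝ) × ℤ =>
        w B p.2 * (f : (Fin n → ℝ) → ℂ) ((B ^ p.2).mulVec p.1)) 2 ν
        = eLpNorm (fun p : (Fin n → ℝ) × ℤ => w B p.2 * f' ((B ^ p.2).mulVec p.1)) 2 ν :=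
      eLpNorm_congr_ae htr
    constructor
    · refine ⟨hGmeas.stronglyMeasurable.aestronglyMeasurable.congr htr.symm, ?_⟩
      rw [heq1, hnorm', ← eLpNorm_congr_ae hae]
      exact Lp.eLpNorm_lt_top f
    · rw [heq1, hnorm']
      exact (eLpNorm_congr_ae hae).symm
  -- the forward map as a plain function
  set Φfun : Lp ℂ 2 (volume : Measure (Fin n → ℝ)) → Lp ℂ 2 ν :=
    fun f => ((hmem f).1).toLp _ with hΦfun
  have hΦcoe : ∀ f : Lp ℂ 2 (volume : Measure (Fin n → ℝ)),
      (Φfun f : (Fin n → ℝ) × ℤ → ℂ) =ᵐ[ν]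
        fun p => w B p.2 * (f : (Fin n → ℝ) → ℂ) ((B ^ p.2).mulVec p.1) :=
    fun f => (hmem f).1.coeFn_toLp
  -- additivity
  have hadd : ∀ f g : Lp ℂ 2 (volume : Measure (Fin n → ℝ)),
      Φfun (f + g) = Φfun f + Φfun g := by
    intro f g
    apply Lp.ext
    have h1 := hΦcoe (f + g)
    have h2 := hΦcoe f
    have h3 := hΦcoe g
    have h4 := lemTr hB hE hdisj' hcover' (w B) (Lp.coeFn_add f g)
    have h5 : (↑(Φfun f + Φfun g) : (Fin n → ℝ) × ℤ → ℂ) =ᵐ[ν] ↑(Φfun f) + ↑(Φfun g) :=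
      Lp.coeFn_add _ _
    filter_upwards [h1, h2, h3, h4, h5] with p hp1 hp2 hp3 hp4 hp5
    rw [hp1, hp4, hp5]
    simp only [Pi.add_apply]
    rw [mul_add]; exact congrArg₂ (· + ·) hp2.symm hp3.symm
  -- scalar multiplication
  have hsmul : ∀ (c : ℂ) (f : Lp ℂ 2 (volume : Measure (Fin n → ℝ))),
      Φfun (c • f) = c • Φfun f := by
    intro c f
    apply Lp.ext
    have h1 := hΦcoe (c • f)
    have h2 := hΦcoe f
    have h4 := lemTr hB hE hdisj' hcover' (w B) (Lp.coeFn_smul c f)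
    have h5 : (↑(c • Φfun f) : (Fin n → ℝ) × ℤ → ℂ) =ᵐ[ν] c • (↑(Φfun f) : _ → ℂ) :=
      Lp.coeFn_smul _ _
    filter_upwards [h1, h2, h4, h5] with p hp1 hp2 hp4 hp5
    rw [hp1, hp4, hp5]
    simp only [Pi.smul_apply, smul_eq_mul]
    rw [hp2]
    ring
  -- norm preservation
  have hnorm : ∀ f : Lp ℂ 2 (volume : Measure (Fin n → ℝ)), ‖Φfun f‖ = ‖f‖ := by
    intro f
    rw [hΦfun]
    rw [Lp.norm_toLp _ (hmem f).1, (hmem f).2]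
    exact (Lp.norm_def f).symm
  -- surjectivity
  have hsurj : Function.Surjective Φfun := by
    intro g
    have hsm := Lp.aestronglyMeasurable g
    set g' := hsm.mk _ with hg'def
    have hg'meas : Measurable g' := hsm.stronglyMeasurable_mk.measurable
    have haeg : (g : (Fin n → ℝ) × ℤ → ℂ) =ᵐ[ν] g' := hsm.ae_eq_mk
    -- the index function
    set idx : (Fin n → ℝ) → ℤ :=
      fun y => if h : ∃ k : ℤ, y ∈ img B E k then h.choose else 0 with hidxdef
    have hidx_mem : ∀ {k : ℤ} {y : Fin n → ℝ}, y ∈ img B E k → idx y = k := by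
      intro k y hy
      have hex : ∃ j : ℤ, y ∈ img B E j := ⟨k, hy⟩
      have hch := hex.choose_spec
      have hchk : hex.choose = k := by
        by_contra hne
        exact Set.disjoint_left.mp (hdisj' hne) hch hy
      rw [hidxdef]
      simpa [dif_pos hex] using hchk
    have hidx_none : ∀ {y : Fin n → ℝ}, (¬ ∃ j : ℤ, y ∈ img B E j) → idx y = 0 := by
      intro y hy
      rw [hidxdef]
      simp [dif_neg hy]
    have hidx_meas : Measurable idx := by
      apply measurable_to_countable'
      intro k
      by_cases hk : k = 0
      · subst hk
        have heqs : idx ⁻¹' {0} = img B E 0 ∪ (⋃ j : ℤ, img B E j)ᶜ := by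
          ext y
          simp only [Set.mem_preimage, Set.mem_singleton_iff, Set.mem_union,
            Set.mem_compl_iff, Set.mem_iUnion, not_exists]
          constructor
          · intro h0
            by_cases hex : ∃ j : ℤ, y ∈ img B E j
            · obtain ⟨j, hj⟩ := hex
              have hj0 : j = (0:ℤ) := by rw [← h0, hidx_mem hj]
              left; rwa [hj0] at hj
            · right; intro j hj; exact hex ⟨j, hj⟩
          · rintro (hy | hy)
            · exact hidx_mem hy
            · exact hidx_none fun ⟨j, hj⟩ => hy j hj
        rw [heqs]
        exact (img_meas hB hE 0).union
          (MeasurableSet.iUnion fun j => img_meas hB hE j).compl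
      · have heqs : idx ⁻¹' {k} = img B E k := by
          ext y
          simp only [Set.mem_preimage, Set.mem_singleton_iff]
          constructor
          · intro h0
            by_cases hex : ∃ j : ℤ, y ∈ img B E j
            · obtain ⟨j, hj⟩ := hex
              have : j = k := by rw [← h0, hidx_mem hj]
              rwa [this] at hj
            · exact absurd (by rw [← h0, hidx_none hex]) hk
          · intro hy; exact hidx_mem hy
        rw [heqs]
        exact img_meas hB hE k
    -- the two-variable auxiliary function and the candidate preimage
    set G2 : (Fin n → ℝ) × ℤ → ℂ := fun q =>
      (img B E q.2).indicator (fun y => w B (-q.2) * g' ((B ^ (-q.2)).mulVec y, q.2)) q.1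
      with hG2def
    have hG2meas : Measurable G2 := by
      apply measurable_from_prod_countable_left
      intro k
      show Measurable fun y : Fin n → ℝ =>
        (img B E k).indicator (fun y => w B (-k) * g' ((B ^ (-k)).mulVec y, k)) y
      exact (measurable_const.mul
        (hg'meas.comp ((measurable_mulVec (B ^ (-k))).prodMk measurable_const))).indicator
        (img_meas hB hE k)
    set F : (Fin n → ℝ) → ℂ := fun y => G2 (y, idx y) with hFdef
    have hFmeas : Measurable F := hG2meas.comp (measurable_id.prodMk hidx_meas)
    -- pointwise identity
    have hkey : ∀ (k : ℤ) (x : Fin n → ℝ), x ∈ E →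
        F ((B ^ k).mulVec x) = w B (-k) * g' (x, k) := by
      intro k x hx
      have hmemx : (B ^ k).mulVec x ∈ img B E k := Set.mem_image_of_mem _ hx
      have hidxy : idx ((B ^ k).mulVec x) = k := hidx_mem hmemx
      rw [hFdef]
      simp only [hG2def]
      rw [hidxy, Set.indicator_of_mem hmemx, inv_apply hB k x]
    -- a.e. the first coordinate lies in E
    have haeE : ∀ᵐ p : (Fin n → ℝ) × ℤ ∂ν, p.1 ∈ E := by
      rw [ae_iff]
      have hset : {p : (Fin n → ℝ) × ℤ | ¬ p.1 ∈ E} = Eᶜ ×ˢ (Set.univ : Set ℤ) := by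
        ext p; simp [Set.mem_prod]
      rw [hset, hν, Measure.prod_prod, Measure.restrict_apply hE.compl]
      simp
    -- L² norm identity for F
    have hnormF : ∫⁻ y, ((‖F y‖₊ : ℝ≥0∞)) ^ (2:ℕ) ∂volume
        = ∫⁻ q, ((‖g' q‖₊ : ℝ≥0∞)) ^ (2:ℕ) ∂ν := by
      rw [← lemL hB hE hdisj' hcover' _ (hFmeas.nnnorm.coe_nnreal_ennreal.pow_const _)]
      apply lintegral_congr_ae
      filter_upwards [haeE] with p hp
      rw [hkey p.2 p.1 hp, lemW hB (-p.2) _, ← mul_assoc,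
        ← ENNReal.ofReal_mul (zpow_nonneg hc.le _)]
      have h1 : |B.det| ^ p.2 * |B.det| ^ (-p.2) = 1 := by
        rw [← zpow_add₀ (ne_of_gt hc)]; simp
      rw [h1, ENNReal.ofReal_one, one_mul, Prod.mk.eta]
    have hmemF : MemLp F 2 (volume : Measure (Fin n → ℝ)) := by
      refine ⟨hFmeas.stronglyMeasurable.aestronglyMeasurable, ?_⟩
      rw [eLpNorm_two_sq, hnormF, ← eLpNorm_two_sq, ← eLpNorm_congr_ae haeg]
      exact Lp.eLpNorm_lt_top g
    refine ⟨hmemF.toLp F, ?_⟩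
    apply Lp.ext
    have h1 := hΦcoe (hmemF.toLp F)
    have h2 := lemTr hB hE hdisj' hcover' (w B) (hmemF.coeFn_toLp)
    filter_upwards [h1, h2, haeE, haeg] with p hp1 hp2 hpE hpg
    rw [hp1, hp2, hkey p.2 p.1 hpE, ← mul_assoc, lemWW hB p.2, one_mul, Prod.mk.eta, hpg]
  -- assemble the linear isometry
  set Φ₀ : Lp ℂ 2 (volume : Measure (Fin n → ℝ)) →ₗᵢ[ℂ] Lp ℂ 2 ν :=
    { toFun := Φfun
      map_add' := hadd
      map_smul' := hsmul
      norm_map' := hnorm } with hΦ₀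
  have hsurj₀ : Function.Surjective Φ₀ := hsurj
  refine ⟨LinearIsometryEquiv.ofSurjective Φ₀ hsurj₀, fun f => ?_⟩
  have hcoe : (LinearIsometryEquiv.ofSurjective Φ₀ hsurj₀) f = Φfun f := rfl
  rw [hcoe]
  exact hΦcoe f
end

section
/- With E a measurable set tiling ℝⁿ under dilation by B = Aᵀ (i.e., the B^j(E), j ∈ ℤ, are pairwise disjoint and cover ℝⁿ up to measure zero) and Φ : L²(ℝⁿ) → L²(E × ℤ) the unitary Φf(x,k) = |det B|^{k/2} f(B^k x), the conjugated dilation operator D̃_A = Φ (ℱ D_A ℱ^{-1}) Φ^{-1} satisfies D̃_A f(x,k) = f(x, k-1) for all f ∈ L²(E × ℤ). -/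
open MeasureTheory Complex Matrix

section Aux

private instance aux_count_sfinite : SFinite (Measure.count : Measure ℤ) := by
  rw [Measure.count]; infer_instance

private lemma aux_prod_of_forall {α : Type*} [MeasurableSpace α] (μ : Measure α)
    (P : α × ℤ → Prop) (h : ∀ k : ℤ, ∀ᵐ x ∂μ, P (x, k)) :
    ∀ᵐ p ∂μ.prod (Measure.count : Measure ℤ), P p := by
  rw [ae_iff]
  have hsub : {a : α × ℤ | ¬ P a} ⊆
      ⋃ k : ℤ, (toMeasurable μ {x | ¬ P (x, k)}) ×ˢ ({k} : Set ℤ) := by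
    rintro ⟨x, k⟩ hp
    exact Set.mem_iUnion.2 ⟨k, subset_toMeasurable μ _ hp, rfl⟩
  refine measure_mono_null hsub (measure_iUnion_null fun k => ?_)
  rw [Measure.prod_prod, measure_toMeasurable, ae_iff.1 (h k), zero_mul]

private lemma aux_forall_of_prod {α : Type*} [MeasurableSpace α] (μ : Measure α) [SFinite μ]
    (P : α × ℤ → Prop)
    (h : ∀ᵐ p ∂μ.prod (Measure.count : Measure ℤ), P p) :
    ∀ k : ℤ, ∀ᵐ x ∂μ, P (x, k) := by
  intro k
  filter_upwards [Measure.ae_ae_of_ae_prod h] with x hx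
  by_contra hc
  rw [ae_iff, Measure.count_eq_zero_iff] at hx
  exact absurd hx (Set.nonempty_iff_ne_empty.1 ⟨k, hc⟩)

end Aux

/-- Let `E` tile `ℝⁿ` under dilation by `B = Aᵀ`, let
`Φ : L²(ℝⁿ) → L²(E × ℤ)` be the unitary `Φ f (x, k) = |det B|^{k/2} f (B^k x)`, and
let `D̂ = ℱ D_A ℱ^{-1}` be the Fourier-conjugated dilation, i.e. the unitary with
`D̂ f (ξ) = |det B|^{-1/2} f (B^{-1} ξ)`.  Then the conjugated dilation
`D̃_A = Φ D̂ Φ^{-1}` satisfies `D̃_A f (x, k) = f (x, k - 1)` for all `f ∈ L²(E × ℤ)`. -/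
theorem conjugated_dilation_is_shift {n : ℕ} (A : Matrix (Fin n) (Fin n) ℝ)
    (hA : A.det ≠ 0) (E : Set (Fin n → ℝ)) (hE : MeasurableSet E)
    (hdisj : Pairwise fun j k : ℤ =>
      Disjoint ((fun x => (Aᵀ ^ j).mulVec x) '' E) ((fun x => (Aᵀ ^ k).mulVec x) '' E))
    (hcover : volume ((⋃ j : ℤ, (fun x => (Aᵀ ^ j).mulVec x) '' E)ᶜ) = 0)
    (Φ : Lp ℂ 2 (volume : Measure (Fin n → ℝ)) ≃ₗᵢ[ℂ]
      Lp ℂ 2 (((volume : Measure (Fin n → ℝ)).restrict E).prod (Measure.count : Measure ℤ)))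
    (hΦ : ∀ f : Lp ℂ 2 (volume : Measure (Fin n → ℝ)),
      (Φ f : (Fin n → ℝ) × ℤ → ℂ) =ᵐ[((volume : Measure (Fin n → ℝ)).restrict E).prod
          (Measure.count : Measure ℤ)]
        fun p => ((|Aᵀ.det| ^ ((p.2 : ℝ) / 2) : ℝ) : ℂ) * f ((Aᵀ ^ p.2).mulVec p.1))
    (Dhat : Lp ℂ 2 (volume : Measure (Fin n → ℝ)) ≃ₗᵢ[ℂ]
      Lp ℂ 2 (volume : Measure (Fin n → ℝ)))
    (hDhat : ∀ f : Lp ℂ 2 (volume : Measure (Fin n → ℝ)),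
      (Dhat f : (Fin n → ℝ) → ℂ) =ᵐ[volume]
        fun ξ => ((Real.sqrt |Aᵀ.det| : ℂ))⁻¹ * f ((Aᵀ)⁻¹.mulVec ξ)) :
    ∀ f : Lp ℂ 2 (((volume : Measure (Fin n → ℝ)).restrict E).prod
        (Measure.count : Measure ℤ)),
      (Φ (Dhat (Φ.symm f)) : (Fin n → ℝ) × ℤ → ℂ)
        =ᵐ[((volume : Measure (Fin n → ℝ)).restrict E).prod (Measure.count : Measure ℤ)]
          fun p => f (p.1, p.2 - 1) := by
  intro f
  set B := Aᵀ with hBdef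
  have hBdet : B.det ≠ 0 := by rw [hBdef, Matrix.det_transpose]; exact hA
  have hBu : IsUnit B.det := hBdet.isUnit
  have hdpos : (0 : ℝ) < |B.det| := abs_pos.2 hBdet
  set g := Φ.symm f with hgdef
  -- matrix identity : B⁻¹ * B^k = B^(k-1)
  have hmat : ∀ k : ℤ, B⁻¹ * B ^ k = B ^ (k - 1) := by
    intro k
    rw [show k - 1 = -1 + k by ring, Matrix.zpow_add hBu, Matrix.zpow_neg_one]
  -- scalar identity
  have hscal : ∀ k : ℤ,
      ((|B.det| ^ ((k : ℝ) / 2) : ℝ) : ℂ) * ((Real.sqrt |B.det| : ℂ))⁻¹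
        = ((|B.det| ^ (((k - 1 : ℤ) : ℝ) / 2) : ℝ) : ℂ) := by
    intro k
    rw [← Complex.ofReal_inv, ← Complex.ofReal_mul]
    congr 1
    rw [Real.sqrt_eq_rpow, ← Real.rpow_neg hdpos.le, ← Real.rpow_add hdpos]
    congr 1
    push_cast
    ring
  -- fact (b): f p = c(p.2) * g (B^p.2 p.1) a.e.
  have h2 : (f : (Fin n → ℝ) × ℤ → ℂ)
      =ᵐ[((volume : Measure (Fin n → ℝ)).restrict E).prod (Measure.count : Measure ℤ)]
      fun p => ((|B.det| ^ ((p.2 : ℝ) / 2) : ℝ) : ℂ) * g ((B ^ p.2).mulVec p.1) := by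
    have h := hΦ g
    rwa [show Φ g = f from Φ.apply_symm_apply f] at h
  -- transfer of hDhat along x ↦ B^k x
  have h3 := hDhat g
  have h4 : ∀ k : ℤ, ∀ᵐ x ∂(volume : Measure (Fin n → ℝ)).restrict E,
      (Dhat g : (Fin n → ℝ) → ℂ) ((B ^ k).mulVec x)
        = ((Real.sqrt |B.det| : ℂ))⁻¹ * g ((B ^ (k - 1)).mulVec x) := by
    intro k
    have hdetk : LinearMap.det (Matrix.toLin' (B ^ k)) ≠ 0 := by
      rw [LinearMap.det_toLin']
      exact (hBu.det_zpow k).ne_zero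
    have h3' : volume {ξ : Fin n → ℝ | ¬ (Dhat g : (Fin n → ℝ) → ℂ) ξ
        = ((Real.sqrt |B.det| : ℂ))⁻¹ * g (B⁻¹.mulVec ξ)} = 0 := ae_iff.1 h3
    have hpre : volume ((Matrix.toLin' (B ^ k)) ⁻¹' {ξ : Fin n → ℝ |
        ¬ (Dhat g : (Fin n → ℝ) → ℂ) ξ
          = ((Real.sqrt |B.det| : ℂ))⁻¹ * g (B⁻¹.mulVec ξ)}) = 0 := by
      rw [Measure.addHaar_preimage_linearMap volume hdetk, h3', mul_zero]
    have hμpre : ((volume : Measure (Fin n → ℝ)).restrict E)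
        ((Matrix.toLin' (B ^ k)) ⁻¹' {ξ : Fin n → ℝ |
          ¬ (Dhat g : (Fin n → ℝ) → ℂ) ξ
            = ((Real.sqrt |B.det| : ℂ))⁻¹ * g (B⁻¹.mulVec ξ)}) = 0 :=
      le_antisymm (hpre ▸ Measure.restrict_apply_le _ _) zero_le
    rw [ae_iff]
    refine measure_mono_null (fun x hx => ?_) hμpre
    simp only [Set.mem_setOf_eq] at hx
    simp only [Set.mem_preimage, Matrix.toLin'_apply, Set.mem_setOf_eq]
    intro hcon
    apply hx
    rw [hcon, Matrix.mulVec_mulVec, hmat k]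
  -- shifted version of h2
  have h2' : ∀ᵐ p ∂((volume : Measure (Fin n → ℝ)).restrict E).prod
      (Measure.count : Measure ℤ),
      (f : (Fin n → ℝ) × ℤ → ℂ) (p.1, p.2 - 1)
        = ((|B.det| ^ (((p.2 - 1 : ℤ) : ℝ) / 2) : ℝ) : ℂ)
            * g ((B ^ (p.2 - 1)).mulVec p.1) :=
    aux_prod_of_forall _ _ (fun k => aux_forall_of_prod _ _ h2 (k - 1))
  have h4' : ∀ᵐ p ∂((volume : Measure (Fin n → ℝ)).restrict E).prod
      (Measure.count : Measure ℤ),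
      (Dhat g : (Fin n → ℝ) → ℂ) ((B ^ p.2).mulVec p.1)
        = ((Real.sqrt |B.det| : ℂ))⁻¹ * g ((B ^ (p.2 - 1)).mulVec p.1) :=
    aux_prod_of_forall _ _ h4
  have h1 := hΦ (Dhat g)
  filter_upwards [h1, h2', h4'] with p hp1 hp2 hp4
  rw [hp1, hp4, hp2, ← mul_assoc, hscal p.2]
end

section
/- Let A be an n×n integer dilation matrix (all eigenvalues of modulus > 1), B = Aᵀ, and suppose x ∈ ℝⁿ satisfies B^m x ≠ x for all nonzero m ∈ ℤ. Then the unitary representation W̃_x of ℚ_A ⋊_ϑ ℤ on ℓ²(ℤ), given by [W̃_x(β,m)g](k) = e^{-i⟨x, A^k β⟩} g(k-m), is irreducible: every bounded operator on ℓ²(ℤ) commuting with all W̃_x(β,m) is a scalar multiple of the identity. -/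
open Matrix Complex Filter

/-- The set `ℚ_A = ⋃_{j ≥ 0} { A^{-j} v : v ∈ ℤⁿ } ⊆ ℚⁿ`. -/
noncomputable def QA {n : ℕ} (A : Matrix (Fin n) (Fin n) ℚ) : Set (Fin n → ℚ) :=
  {β | ∃ (j : ℕ) (v : Fin n → ℤ), β = (A ^ (-(j : ℤ))).mulVec fun i => (v i : ℚ)}

lemma aux_det_ne {n : ℕ} (A : Matrix (Fin n) (Fin n) ℤ)
    (hA : ∀ μ : ℂ, ((A.map ((↑) : ℤ → ℂ)).charpoly).IsRoot μ → 1 < ‖μ‖) :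
    A.det ≠ 0 := by
  intro h
  have hdet : (A.map ((↑) : ℤ → ℂ)).det = 0 := by
    have := (RingHom.map_det (Int.castRingHom ℂ) A).symm
    rw [h] at this
    simpa [RingHom.mapMatrix_apply] using this
  have hprod := Matrix.det_eq_prod_roots_charpoly (A := A.map ((↑) : ℤ → ℂ))
  rw [hdet] at hprod
  have h0 : (0:ℂ) ∈ (A.map ((↑) : ℤ → ℂ)).charpoly.roots := Multiset.prod_eq_zero_iff.mp hprod.symm
  have := hA 0 (Polynomial.isRoot_of_mem_roots h0)
  norm_num at this

attribute [local instance] Matrix.linftyOpNormedRing Matrix.linftyOpNormedAlgebra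

lemma aux_cast_mulVec {n : ℕ} (A : Matrix (Fin n) (Fin n) ℤ) (hdQ : IsUnit (A.map ((↑) : ℤ → ℚ)).det)
    (j : ℕ) (γ : Fin n → ℚ) :
    (fun i => ((((A.map ((↑) : ℤ → ℚ)) ^ (-(j:ℤ))) *ᵥ γ) i : ℝ)) =
      ((A.map ((↑) : ℤ → ℝ)) ^ (-(j:ℤ))) *ᵥ (fun i => ((γ i : ℚ) : ℝ)) := by
  set Q := A.map ((↑) : ℤ → ℚ)
  set R := A.map ((↑) : ℤ → ℝ)
  have hmap : Q.map ((↑) : ℚ → ℝ) = R := by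
    ext i i'
    simp [Q, R, Matrix.map_apply]
  have hpowmap : ∀ m : ℕ, (Q ^ m).map ((↑) : ℚ → ℝ) = R ^ m := by
    intro m
    have := map_pow ((Rat.castHom ℝ).mapMatrix) Q m
    simpa [RingHom.mapMatrix_apply, hmap] using this
  have hdQ' : IsUnit (Q ^ j).det := by
    rw [Matrix.det_pow]; exact hdQ.pow j
  have hinvmap : ((Q ^ j)⁻¹).map ((↑) : ℚ → ℝ) = (R ^ j)⁻¹ := by
    refine (Matrix.inv_eq_left_inv ?_).symm
    have : ((Q ^ j)⁻¹ * (Q ^ j)).map ((↑) : ℚ → ℝ) = 1 := by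
      rw [Matrix.nonsing_inv_mul _ hdQ']
      exact Matrix.map_one _ (by norm_num) (by norm_num)
    calc ((Q ^ j)⁻¹).map ((↑) : ℚ → ℝ) * R ^ j
        = ((Q ^ j)⁻¹).map ((↑) : ℚ → ℝ) * (Q ^ j).map ((↑) : ℚ → ℝ) := by rw [hpowmap]
      _ = ((Q ^ j)⁻¹ * (Q ^ j)).map ((↑) : ℚ → ℝ) := by
          have := map_mul ((Rat.castHom ℝ).mapMatrix) ((Q ^ j)⁻¹) (Q ^ j)
          simpa [RingHom.mapMatrix_apply] using this.symm
      _ = 1 := this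
  funext i
  rw [Matrix.zpow_neg_natCast, Matrix.zpow_neg_natCast]
  have := RingHom.map_mulVec (Rat.castHom ℝ) ((Q ^ j)⁻¹) γ i
  simpa [Function.comp_def, hinvmap] using this

lemma aux_mem_spectrum_iff {n : ℕ} (M : Matrix (Fin n) (Fin n) ℂ) (μ : ℂ) :
    μ ∈ spectrum ℂ M ↔ M.charpoly.IsRoot μ := by
  have h1 : M.charpoly.eval μ = (Matrix.scalar (Fin n) μ - M).det := by
    rw [Matrix.charpoly, eval_det, matPolyEquiv_charmatrix]
    simp
  have h2 : algebraMap ℂ (Matrix (Fin n) (Fin n) ℂ) μ = Matrix.scalar (Fin n) μ := rfl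
  rw [spectrum.mem_iff, Polynomial.IsRoot, h1, h2, Matrix.isUnit_iff_isUnit_det,
    isUnit_iff_ne_zero, not_ne_iff]

lemma aux_tendsto_pow {n : ℕ} [Nonempty (Fin n)] (M : Matrix (Fin n) (Fin n) ℂ)
    (h : ∀ μ ∈ spectrum ℂ M, ‖μ‖₊ < 1) :
    Tendsto (fun j : ℕ => ‖M ^ j‖) atTop (nhds 0) := by
  haveI : Nontrivial (Matrix (Fin n) (Fin n) ℂ) := by
    refine ⟨0, 1, fun hc => ?_⟩
    have := congr_fun (congr_fun hc (Classical.arbitrary (Fin n))) (Classical.arbitrary (Fin n))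
    simp at this
  haveI : CompleteSpace (Matrix (Fin n) (Fin n) ℂ) := FiniteDimensional.complete ℂ _
  have hrad : spectralRadius ℂ M < 1 := by
    have := spectrum.spectralRadius_lt_of_forall_lt M (r := 1) h
    simpa using this
  obtain ⟨r, hr1, hr2⟩ := ENNReal.lt_iff_exists_nnreal_btwn.mp hrad
  have hgel := spectrum.pow_nnnorm_pow_one_div_tendsto_nhds_spectralRadius M
  have hev : ∀ᶠ j : ℕ in atTop, (‖M ^ j‖₊ : ENNReal) ^ (1 / (j:ℝ)) < r :=
    hgel.eventually_lt_const hr1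
  have hr0 : (0:ℝ) ≤ (r:ℝ) := r.coe_nonneg
  have hrlt : (r:ℝ) < 1 := by exact_mod_cast ENNReal.coe_lt_one_iff.mp hr2
  have hbound : ∀ᶠ j : ℕ in atTop, ‖M ^ j‖ ≤ (r:ℝ) ^ j := by
    filter_upwards [hev, eventually_gt_atTop 0] with j hj hj0
    have hj0' : (j:ℝ) ≠ 0 := Nat.cast_ne_zero.mpr hj0.ne'
    have : ((‖M ^ j‖₊ : ENNReal) ^ (1 / (j:ℝ))) ^ (j:ℝ) ≤ (r:ENNReal) ^ (j:ℝ) :=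
      ENNReal.rpow_le_rpow hj.le (Nat.cast_nonneg j)
    rw [← ENNReal.rpow_mul, one_div, inv_mul_cancel₀ hj0', ENNReal.rpow_one] at this
    rw [ENNReal.rpow_natCast] at this
    rw [← ENNReal.coe_pow] at this
    have h2 : ‖M ^ j‖₊ ≤ r ^ j := ENNReal.coe_le_coe.mp this
    calc ‖M ^ j‖ = ((‖M ^ j‖₊ : ℝ)) := rfl
    _ ≤ ((r ^ j : NNReal) : ℝ) := by exact_mod_cast h2
    _ = (r:ℝ) ^ j := by push_cast; ring
  have hl : Tendsto (fun j : ℕ => (r:ℝ) ^ j) atTop (nhds 0) :=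
    tendsto_pow_atTop_nhds_zero_of_lt_one hr0 hrlt
  refine squeeze_zero' (Eventually.of_forall fun j => norm_nonneg _) hbound hl

lemma aux_norm_map {n : ℕ} (P : Matrix (Fin n) (Fin n) ℝ) :
    ‖P.map (Complex.ofReal)‖ = ‖P‖ := by
  rw [Matrix.linfty_opNorm_def, Matrix.linfty_opNorm_def]
  congr 1
  ext i
  simp [Matrix.map_apply]

lemma aux_charpoly_transpose {n : ℕ} (M : Matrix (Fin n) (Fin n) ℂ) :
    Mᵀ.charpoly = M.charpoly := by
  rw [Matrix.charpoly, Matrix.charpoly, ← Matrix.det_transpose (charmatrix M)]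
  congr 1
  ext i j
  by_cases h : i = j
  · subst h; simp [charmatrix_apply_eq, Matrix.transpose_apply]
  · rw [Matrix.transpose_apply, charmatrix_apply_ne _ _ _ h,
      charmatrix_apply_ne _ _ _ (Ne.symm h), Matrix.transpose_apply]

lemma aux_separation {n : ℕ} (A : Matrix (Fin n) (Fin n) ℤ)
    (hA : ∀ μ : ℂ, ((A.map ((↑) : ℤ → ℂ)).charpoly).IsRoot μ → 1 < ‖μ‖)
    (x : Fin n → ℝ)
    (hx : ∀ m : ℤ, m ≠ 0 → ((A.map ((↑) : ℤ → ℝ))ᵀ ^ m).mulVec x ≠ x)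
    (k l : ℤ) (hkl : k ≠ l)
    (hcon : ∀ β ∈ QA (A.map ((↑) : ℤ → ℚ)),
      Complex.exp (-Complex.I *
          (∑ i, x i * (((A.map ((↑) : ℤ → ℝ)) ^ k).mulVec fun i => (β i : ℝ)) i : ℝ)) =
      Complex.exp (-Complex.I *
          (∑ i, x i * (((A.map ((↑) : ℤ → ℝ)) ^ l).mulVec fun i => (β i : ℝ)) i : ℝ))) :
    False := by
  rcases Nat.eq_zero_or_pos n with hn | hn
  · subst hn
    exact hx 1 one_ne_zero (Subsingleton.elim _ _)
  haveI : Nonempty (Fin n) := Fin.pos_iff_nonempty.mp hn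
  set R := A.map ((↑) : ℤ → ℝ) with hRdef
  set Q := A.map ((↑) : ℤ → ℚ) with hQdef
  set Cm := A.map ((↑) : ℤ → ℂ) with hCdef
  have hdA : A.det ≠ 0 := aux_det_ne A hA
  have hdR : IsUnit R.det := by
    have h1 : R.det = ((A.det : ℤ) : ℝ) := by
      have := RingHom.map_det (Int.castRingHom ℝ) A
      simpa [RingHom.mapMatrix_apply] using this.symm
    rw [h1]
    exact isUnit_iff_ne_zero.mpr (by exact_mod_cast hdA)
  have hdQ : IsUnit Q.det := by
    have h1 : Q.det = ((A.det : ℤ) : ℚ) := by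
      have := RingHom.map_det (Int.castRingHom ℚ) A
      simpa [RingHom.mapMatrix_apply] using this.symm
    rw [h1]
    exact isUnit_iff_ne_zero.mpr (by exact_mod_cast hdA)
  have hdC : Cm.det ≠ 0 := by
    have h1 : Cm.det = ((A.det : ℤ) : ℂ) := by
      have := RingHom.map_det (Int.castRingHom ℂ) A
      simpa [RingHom.mapMatrix_apply] using this.symm
    rw [h1]
    exact_mod_cast hdA
  -- step 1 : real-valued 2πℤ relation
  have key : ∀ β ∈ QA Q, ∃ t : ℤ,
      (∑ i, x i * ((R ^ k) *ᵥ fun i => (β i : ℝ)) i) -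
        (∑ i, x i * ((R ^ l) *ᵥ fun i => (β i : ℝ)) i) = 2 * Real.pi * t := by
    intro β hβ
    obtain ⟨t, ht⟩ := Complex.exp_eq_exp_iff_exists_int.mp (hcon β hβ)
    refine ⟨-t, ?_⟩
    set a := (∑ i, x i * ((R ^ k) *ᵥ fun i => (β i : ℝ)) i) with hadef
    set b := (∑ i, x i * ((R ^ l) *ᵥ fun i => (β i : ℝ)) i) with hbdef
    have h2 : (-Complex.I) * (a : ℂ) = (-Complex.I) * ((b : ℂ) + 2 * Real.pi * (-t : ℤ)) := by
      rw [ht]; push_cast; ring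
    have h3 := mul_left_cancel₀ (neg_ne_zero.mpr Complex.I_ne_zero) h2
    have h4 : a = b + 2 * Real.pi * (-t : ℤ) := by exact_mod_cast h3
    linarith [h4]
  -- step 2 : coordinates of the lattice vectors
  have key2 : ∀ (j : ℕ) (i : Fin n), ∃ t : ℤ,
      (x ᵥ* ((R ^ k - R ^ l) * (R ^ j)⁻¹)) i = 2 * Real.pi * t := by
    intro j i
    set v : Fin n → ℤ := Pi.single i 1 with hvdef
    have hβmem : ((Q ^ (-(j:ℤ))) *ᵥ fun i' => ((v i' : ℤ) : ℚ)) ∈ QA Q := ⟨j, v, rfl⟩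
    obtain ⟨t, ht⟩ := key _ hβmem
    refine ⟨t, ?_⟩
    have hcast := aux_cast_mulVec A hdQ j (fun i' => ((v i' : ℤ) : ℚ))
    rw [hcast] at ht
    have he : (fun i' => ((v i' : ℚ) : ℝ)) = Pi.single i (1:ℝ) := by
      funext i'
      rw [hvdef]
      by_cases h : i' = i
      · subst h; simp
      · simp [Pi.single_apply, h]
    rw [he] at ht
    have hterm : ∀ m : ℤ,
        (∑ i', x i' * ((R ^ m) *ᵥ ((R ^ (-(j:ℤ))) *ᵥ Pi.single i (1:ℝ))) i')
          = (x ᵥ* (R ^ m * (R ^ j)⁻¹)) i := by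
      intro m
      rw [Matrix.mulVec_mulVec, Matrix.zpow_neg_natCast]
      have : (∑ i', x i' * ((R ^ m * (R ^ j)⁻¹) *ᵥ Pi.single i (1:ℝ)) i')
          = x ⬝ᵥ ((R ^ m * (R ^ j)⁻¹) *ᵥ Pi.single i (1:ℝ)) := rfl
      rw [this, Matrix.dotProduct_mulVec, dotProduct_single, mul_one]
    rw [hterm k, hterm l] at ht
    rw [Matrix.sub_mul, Matrix.vecMul_sub]
    rw [← ht]
    rfl
  -- the nonzero vector w
  have hvm : x ᵥ* (R ^ k) ≠ x ᵥ* (R ^ l) := by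
    intro hEq
    have h1 : x ᵥ* (R ^ (k - l)) = x := by
      have h2 : x ᵥ* (R ^ k) ᵥ* (R ^ (-l)) = x ᵥ* (R ^ l) ᵥ* (R ^ (-l)) := by rw [hEq]
      rw [Matrix.vecMul_vecMul, Matrix.vecMul_vecMul, ← Matrix.zpow_add hdR,
        ← Matrix.zpow_add hdR] at h2
      simpa [sub_eq_add_neg] using h2
    have h3 : (Rᵀ ^ (k - l)) *ᵥ x = x := by
      rw [← Matrix.transpose_zpow, Matrix.mulVec_transpose]
      exact h1
    exact hx (k - l) (sub_ne_zero.mpr hkl) h3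
  have hw : x ᵥ* (R ^ k - R ^ l) ≠ 0 := by
    rw [Matrix.vecMul_sub]
    exact fun hc => hvm (sub_eq_zero.mp hc)
  -- lower bound
  have hlow : ∀ j : ℕ, 2 * Real.pi ≤ ‖x ᵥ* ((R ^ k - R ^ l) * (R ^ j)⁻¹)‖ := by
    intro j
    have hdRj : IsUnit (R ^ j).det := by rw [Matrix.det_pow]; exact hdR.pow j
    have hne : x ᵥ* ((R ^ k - R ^ l) * (R ^ j)⁻¹) ≠ 0 := by
      intro hc
      apply hw
      have : (x ᵥ* ((R ^ k - R ^ l) * (R ^ j)⁻¹)) ᵥ* (R ^ j) = 0 := by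
        rw [hc, Matrix.zero_vecMul]
      rw [Matrix.vecMul_vecMul, mul_assoc, Matrix.nonsing_inv_mul _ hdRj, mul_one] at this
      exact this
    obtain ⟨i, hi⟩ := Function.ne_iff.mp hne
    obtain ⟨t, ht⟩ := key2 j i
    have ht0 : t ≠ 0 := by
      intro h0
      rw [h0] at ht
      simp at ht
      exact hi (by simpa using ht)
    have h1 : (2 * Real.pi) * 1 ≤ |2 * Real.pi * t| := by
      rw [abs_mul, abs_of_pos (by positivity : (0:ℝ) < 2 * Real.pi)]
      have : (1:ℝ) ≤ |(t:ℝ)| := by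
        rw [← Int.cast_abs]
        exact_mod_cast Int.one_le_abs ht0
      nlinarith [Real.pi_pos]
    calc 2 * Real.pi = 2 * Real.pi * 1 := by ring
    _ ≤ |2 * Real.pi * t| := h1
    _ = ‖(x ᵥ* ((R ^ k - R ^ l) * (R ^ j)⁻¹)) i‖ := by rw [ht, Real.norm_eq_abs]
    _ ≤ ‖x ᵥ* ((R ^ k - R ^ l) * (R ^ j)⁻¹)‖ := norm_le_pi_norm _ i
  -- upper bound tendsto
  set N : Matrix (Fin n) (Fin n) ℝ := (Rᵀ)⁻¹ with hNdef
  set Nc : Matrix (Fin n) (Fin n) ℂ := N.map Complex.ofReal with hNcdef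
  have heq : ∀ j : ℕ,
      x ᵥ* ((R ^ k - R ^ l) * (R ^ j)⁻¹) = (N ^ j) *ᵥ (x ᵥ* (R ^ k - R ^ l)) := by
    intro j
    rw [← Matrix.vecMul_vecMul, ← Matrix.inv_pow']
    rw [← Matrix.mulVec_transpose]
    congr 1
    rw [Matrix.transpose_pow, Matrix.transpose_nonsing_inv]
  have hnormpow : ∀ j : ℕ, ‖(N ^ j : Matrix (Fin n) (Fin n) ℝ)‖ = ‖Nc ^ j‖ := by
    intro j
    rw [← aux_norm_map (N ^ j)]
    congr 1
    have := map_pow ((Complex.ofRealHom).mapMatrix) N j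
    rw [RingHom.mapMatrix_apply, RingHom.mapMatrix_apply] at this
    exact this
  -- spectrum of Nc
  have hCmT : IsUnit (Cmᵀ) := by
    rw [Matrix.isUnit_iff_isUnit_det, Matrix.det_transpose]
    exact isUnit_iff_ne_zero.mpr hdC
  have hNcEq : Nc = (Cmᵀ)⁻¹ := by
    have hRT : (Rᵀ).map Complex.ofReal = Cmᵀ := by
      ext i i'
      simp [hRdef, hCdef, Matrix.map_apply, Matrix.transpose_apply]
    have hdRT : IsUnit (Rᵀ).det := by rwa [Matrix.det_transpose]
    refine (Matrix.inv_eq_left_inv ?_).symm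
    calc ((Rᵀ)⁻¹).map Complex.ofReal * Cmᵀ
        = ((Rᵀ)⁻¹).map Complex.ofReal * (Rᵀ).map Complex.ofReal := by rw [hRT]
      _ = ((Rᵀ)⁻¹ * Rᵀ).map Complex.ofReal := by
          exact (Matrix.map_mul (f := Complex.ofRealHom)).symm
      _ = 1 := by
          rw [Matrix.nonsing_inv_mul _ hdRT]
          exact Matrix.map_one _ (by norm_num) (by norm_num)
  have hspec : ∀ μ ∈ spectrum ℂ Nc, ‖μ‖₊ < 1 := by
    intro μ hμ
    set u := hCmT.unit with hudef
    have hu : (u : Matrix (Fin n) (Fin n) ℂ) = Cmᵀ := hCmT.unit_spec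
    have hNcu : Nc = ((u⁻¹ : _ˣ) : Matrix (Fin n) (Fin n) ℂ) := by
      rw [hNcEq]
      refine Matrix.inv_eq_left_inv ?_
      rw [← hu]
      exact u.inv_mul
    have hμ0 : μ ≠ 0 := by
      intro h0
      rw [h0, hNcu] at hμ
      exact spectrum.not_isUnit_of_zero_mem _ hμ (u⁻¹).isUnit
    have hμ' : ((Units.mk0 μ hμ0 : ℂˣ) : ℂ) ∈ spectrum ℂ ((u⁻¹ : _ˣ) : Matrix (Fin n) (Fin n) ℂ) := by
      rw [← hNcu]; exact hμ
    have hinv := spectrum.inv_mem_iff.mp hμ'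
    rw [inv_inv] at hinv
    have hroot : (Cmᵀ).charpoly.IsRoot μ⁻¹ := by
      rw [← aux_mem_spectrum_iff]
      simpa [hu] using hinv
    rw [aux_charpoly_transpose] at hroot
    have h1 := hA μ⁻¹ hroot
    rw [norm_inv] at h1
    have habs : ‖μ‖ < 1 := by
      have h2 : 0 < ‖μ‖ := norm_pos_iff.mpr hμ0
      have h3 : ‖μ‖ * 1 < ‖μ‖ * (‖μ‖)⁻¹ :=
        mul_lt_mul_of_pos_left h1 h2
      rwa [mul_one, mul_inv_cancel₀ (ne_of_gt h2)] at h3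
    have : ‖μ‖ < 1 := habs
    exact_mod_cast this
  have htendN := aux_tendsto_pow Nc hspec
  have htend : Tendsto (fun j : ℕ => ‖x ᵥ* ((R ^ k - R ^ l) * (R ^ j)⁻¹)‖) atTop (nhds 0) := by
    have hb : ∀ j : ℕ, ‖x ᵥ* ((R ^ k - R ^ l) * (R ^ j)⁻¹)‖
        ≤ ‖Nc ^ j‖ * ‖x ᵥ* (R ^ k - R ^ l)‖ := by
      intro j
      rw [heq j, ← hnormpow j]
      exact Matrix.linfty_opNorm_mulVec _ _
    have hmul : Tendsto (fun j : ℕ => ‖Nc ^ j‖ * ‖x ᵥ* (R ^ k - R ^ l)‖) atTop (nhds 0) := by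
      simpa using htendN.mul_const (‖x ᵥ* (R ^ k - R ^ l)‖)
    exact squeeze_zero' (Eventually.of_forall fun j => norm_nonneg _)
      (Eventually.of_forall hb) hmul
  have hfinal : 2 * Real.pi ≤ 0 := ge_of_tendsto htend (Eventually.of_forall hlow)
  nlinarith [Real.pi_pos]

/-- Let `A` be an `n × n` integer dilation matrix (all eigenvalues of
modulus `> 1`), `B = Aᵀ`, and suppose `x ∈ ℝⁿ` satisfies `B^m x ≠ x` for all nonzero
`m ∈ ℤ`.  Then the unitary representation `W̃_x` of `ℚ_A ⋊_ϑ ℤ` on `ℓ²(ℤ)` given by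
`[W̃_x (β, m) g] (k) = e^{-i⟨x, A^k β⟩} g (k - m)` is irreducible: every bounded
operator on `ℓ²(ℤ)` commuting with all `W̃_x (β, m)` is a scalar multiple of the
identity. -/
theorem wavelet_rep_fiber_irreducible {n : ℕ} (A : Matrix (Fin n) (Fin n) ℤ)
    (hA : ∀ μ : ℂ, ((A.map ((↑) : ℤ → ℂ)).charpoly).IsRoot μ → 1 < ‖μ‖)
    (x : Fin n → ℝ)
    (hx : ∀ m : ℤ, m ≠ 0 → ((A.map ((↑) : ℤ → ℝ))ᵀ ^ m).mulVec x ≠ x)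
    (W : (Fin n → ℚ) → ℤ → (lp (fun _ : ℤ => ℂ) 2 ≃ₗᵢ[ℂ] lp (fun _ : ℤ => ℂ) 2))
    (hW : ∀ β : Fin n → ℚ, β ∈ QA (A.map ((↑) : ℤ → ℚ)) → ∀ m : ℤ,
      ∀ g : lp (fun _ : ℤ => ℂ) 2, ∀ k : ℤ,
        (W β m g) k =
          Complex.exp (-Complex.I *
            (∑ i, x i * (((A.map ((↑) : ℤ → ℝ)) ^ k).mulVec fun i => (β i : ℝ)) i : ℝ)) *
            g (k - m))
    (S : lp (fun _ : ℤ => ℂ) 2 →L[ℂ] lp (fun _ : ℤ => ℂ) 2)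
    (hS : ∀ β : Fin n → ℚ, β ∈ QA (A.map ((↑) : ℤ → ℚ)) → ∀ m : ℤ,
      ∀ g : lp (fun _ : ℤ => ℂ) 2, S (W β m g) = W β m (S g)) :
    ∃ c : ℂ, S = c • (ContinuousLinearMap.id ℂ (lp (fun _ : ℤ => ℂ) 2)) := by
  classical
  set φ : (Fin n → ℚ) → ℤ → ℂ := fun β j =>
    Complex.exp (-Complex.I *
      (∑ i, x i * (((A.map ((↑) : ℤ → ℝ)) ^ j).mulVec fun i => (β i : ℝ)) i : ℝ)) with hφdef
  set δ : ℤ → lp (fun _ : ℤ => ℂ) 2 := fun k => lp.single 2 k (1:ℂ) with hδdef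
  have hδ_apply : ∀ k j : ℤ, (δ k) j = if j = k then (1:ℂ) else 0 := by
    intro k j
    rcases eq_or_ne j k with h | h
    · subst h; rw [if_pos rfl]
      exact lp.single_apply_self (E := fun _ : ℤ => ℂ) 2 j (1:ℂ)
    · rw [if_neg h]
      exact lp.single_apply_ne (E := fun _ : ℤ => ℂ) 2 k (1:ℂ) h
  have h0mem : (0 : Fin n → ℚ) ∈ QA (A.map ((↑) : ℤ → ℚ)) := by
    refine ⟨0, 0, ?_⟩
    funext i
    simp
  -- multiplication operators diagonalize δ
  have hWβ0 : ∀ β ∈ QA (A.map ((↑) : ℤ → ℚ)), ∀ k : ℤ, W β 0 (δ k) = φ β k • δ k := by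
    intro β hβ k
    apply lp.ext
    funext j
    rw [lp.coeFn_smul, Pi.smul_apply]
    rw [hW β hβ 0 (δ k) j, sub_zero, hδ_apply]
    by_cases h : j = k
    · subst h; simp [hφdef, smul_eq_mul]
    · simp [h]
  -- step 1: off-diagonal entries vanish
  have hdiag : ∀ k l : ℤ, k ≠ l → (S (δ k)) l = 0 := by
    intro k l hkl
    by_contra hne
    apply aux_separation A hA x hx k l hkl
    intro β hβ
    have h1 := hS β hβ 0 (δ k)
    rw [hWβ0 β hβ k, _root_.map_smul] at h1
    have h2 : (S (δ k)) l = (W β 0 (S (δ k))) l * (φ β l)⁻¹ := by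
      rw [hW β hβ 0 (S (δ k)) l, sub_zero]
      rw [mul_comm (φ β l), mul_assoc, mul_inv_cancel₀ (Complex.exp_ne_zero _), mul_one]
    have h3 : (φ β k • S (δ k)) l = (W β 0 (S (δ k))) l := by rw [← h1]
    rw [lp.coeFn_smul, Pi.smul_apply, smul_eq_mul] at h3
    have h4 : φ β k * (S (δ k)) l = φ β l * (S (δ k)) l := by
      rw [h3, hW β hβ 0 (S (δ k)) l, sub_zero]
    have h5 : φ β k = φ β l := mul_right_cancel₀ hne h4
    exact h5
  -- diagonal entries
  set c : ℤ → ℂ := fun k => (S (δ k)) k with hcdef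
  have hSδ : ∀ k : ℤ, S (δ k) = c k • δ k := by
    intro k
    apply lp.ext
    funext j
    rw [lp.coeFn_smul, Pi.smul_apply, hδ_apply, smul_eq_mul]
    by_cases h : j = k
    · subst h; simp [hcdef]
    · rw [hdiag k j (fun hc => h hc.symm)]
      simp [h]
  -- shift operator
  have hshift : ∀ k : ℤ, W 0 1 (δ k) = δ (k + 1) := by
    intro k
    apply lp.ext
    funext j
    rw [hW 0 h0mem 1 (δ k) j, hδ_apply, hδ_apply]
    have hexp : Complex.exp (-Complex.I *
        ((∑ i, x i * (((A.map ((↑) : ℤ → ℝ)) ^ j).mulVec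
          fun i => (((0 : Fin n → ℚ) i : ℝ))) i : ℝ) : ℂ)) = 1 := by
      have hvec : (fun i : Fin n => (((0 : Fin n → ℚ) i : ℝ))) = (0 : Fin n → ℝ) := by
        funext i; simp
      rw [hvec, Matrix.mulVec_zero]
      simp
    rw [hexp, one_mul]
    by_cases h : j = k + 1
    · subst h; simp
    · have h2 : ¬(j - 1 = k) := fun hc => h (by omega)
      simp [h, h2]
  have hck : ∀ k : ℤ, c (k + 1) = c k := by
    intro k
    have h1 := hS 0 h0mem 1 (δ k)
    rw [hshift k, hSδ k, hSδ (k+1), _root_.map_smul, hshift k] at h1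
    have h2 : (↑(c (k+1) • δ (k+1)) : ℤ → ℂ) (k+1) = (↑(c k • δ (k+1)) : ℤ → ℂ) (k+1) := by
      rw [h1]
    rw [lp.coeFn_smul, lp.coeFn_smul, Pi.smul_apply, Pi.smul_apply, hδ_apply] at h2
    simpa using h2
  have hcconst : ∀ k : ℤ, c k = c 0 := by
    intro k
    induction k using Int.induction_on with
    | zero => rfl
    | succ m ih => rw [hck m, ih]
    | pred m ih => rw [← ih, ← hck (-m - 1)]; norm_num
  refine ⟨c 0, ContinuousLinearMap.ext fun g => ?_⟩
  have hsum := lp.hasSum_single (E := fun _ : ℤ => ℂ) (p := 2) (by norm_num) g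
  have hsingle : ∀ k : ℤ, lp.single (E := fun _ : ℤ => ℂ) 2 k (g k) = g k • δ k := by
    intro k
    apply lp.ext
    funext j
    rw [lp.coeFn_smul, Pi.smul_apply, hδ_apply, smul_eq_mul]
    by_cases h : j = k
    · subst h; simp [lp.single_apply_self]
    · simp [lp.single_apply_ne 2 k _ h, h]
  have hS1 : HasSum (fun k : ℤ => S (lp.single 2 k (g k))) (S g) := hsum.mapL S
  have hS2 : (fun k : ℤ => S (lp.single 2 k (g k)))
      = fun k : ℤ => c 0 • lp.single 2 k (g k) := by
    funext k
    rw [hsingle k, _root_.map_smul, hSδ k, hcconst k, smul_comm, ← hsingle k]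
  rw [hS2] at hS1
  have hS3 : HasSum (fun k : ℤ => c 0 • lp.single (E := fun _ : ℤ => ℂ) 2 k (g k)) (c 0 • g) :=
    hsum.const_smul (c 0)
  have := hS1.unique hS3
  simpa using this
end
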